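/- Let G be a group, m ≥ 1, and χ : G^m → Fin r a finite coloring. Suppose that for every finite coloring χ' of G^m, the set D_k(χ') = { g ∈ G : ∃ x ∈ G^m, the right corner set {x, R_g^{(1)}x, R_g^{(1)}R_g^{(2)}x, …, R_g^{(1)}…R_g^{(k)}x} is χ'-monochromatic } is left IP*. Then for every finite coloring χ of G^m, the shifted-coordinates set D̃_k(χ) = { g ∈ G : ∃ x ∈ G^m, {x, R_g^{(2)}x, R_g^{(2)}R_g^{(3)}x, …, R_g^{(2)}…R_g^{(k+1)}x} is χ-monochromatic } is also left IP*. -/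
import Mathlib


/-- The product of `x_n` over `F` with indices taken in decreasing order. -/
def prodDec {G : Type*} [Group G] (F : Finset ℕ) (x : ℕ → G) : G :=
  ((F.sort (· ≤ ·)).reverse.map x).prod

/-- The left finite product set of a sequence `(x_n)` in `G`. -/
def FPL {G : Type*} [Group G] (x : ℕ → G) : Set G :=
  { g | ∃ F : Finset ℕ, F.Nonempty ∧ g = prodDec F x }

/-- `X` is left IP*: it meets `FP_L(x_n)` for every sequence `(x_n)`. -/
def leftIPStar {G : Type*} [Group G] (X : Set G) : Prop :=
  ∀ x : ℕ → G, (X ∩ FPL x).Nonempty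

/-- The `i`-th point of the right corner configuration along coordinates `(1,…,k)`:
the first `i` coordinates of `x` are multiplied by `g` on the right. -/
def cornerPt {G : Type*} [Group G] {m : ℕ} (x : Fin m → G) (g : G) (i : ℕ) : Fin m → G :=
  fun t => if (t : ℕ) < i then x t * g else x t

/-- The `i`-th point of the right corner configuration along shifted coordinates `(2,…,k+1)`:
coordinates `2,…,i+1` of `x` are multiplied by `g` on the right. -/
def cornerPtShift {G : Type*} [Group G] {m : ℕ} (x : Fin m → G) (g : G) (i : ℕ) : Fin m → G :=
  fun t => if 1 ≤ (t : ℕ) ∧ (t : ℕ) ≤ i then x t * g else x t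

/-- If `D_k(χ')` is left IP* for every finite coloring `χ'` of `G^m`, then the
shifted-coordinates set `D̃_k(χ)` is left IP* for every finite coloring `χ`. -/
theorem stmt7 {G : Type*} [Group G] (m k : ℕ) (hk1 : 1 ≤ k) (hkm : k < m)
    (H : ∀ (r' : ℕ) (χ' : (Fin m → G) → Fin r'),
      leftIPStar { g : G | ∃ (x : Fin m → G) (c : Fin r'),
        ∀ i ≤ k, χ' (cornerPt x g i) = c })
    (r : ℕ) (χ : (Fin m → G) → Fin r) :
    leftIPStar { g : G | ∃ (x : Fin m → G) (c : Fin r),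
      ∀ i ≤ k, χ (cornerPtShift x g i) = c } := by
  haveI : NeZero m := ⟨by omega⟩
  set ρ : (Fin m → G) → (Fin m → G) := fun x t => x (t - 1) with hρ
  have hkey : ∀ (x : Fin m → G) (g : G) (i : ℕ), i ≤ k →
      ρ (cornerPt x g i) = cornerPtShift (ρ x) g i := by
    intro x g i hi
    funext t
    have h1 : (1 : Fin m).val = 1 := by
      simp [Fin.val_one', Nat.mod_eq_of_lt (by omega : 1 < m)]
    have hsub : ((t - 1 : Fin m) : ℕ) = if (t : ℕ) = 0 then m - 1 else (t : ℕ) - 1 := by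
      rw [Fin.sub_def, h1]
      have ht := t.isLt
      rcases Nat.eq_zero_or_pos (t : ℕ) with h | h
      · simp [h, Nat.mod_eq_of_lt (by omega : m - 1 < m)]
      · have h2 : m - 1 + (t : ℕ) = ((t : ℕ) - 1) + m := by omega
        simp only [Fin.val_mk, h2, Nat.add_mod_right,
          Nat.mod_eq_of_lt (by omega : (t:ℕ) - 1 < m), if_neg (by omega : ¬ (t:ℕ) = 0)]
    simp only [hρ, cornerPt, cornerPtShift, hsub]
    rcases Nat.eq_zero_or_pos (t : ℕ) with h | h
    · rw [if_neg (by simp [h]; omega), if_neg (by omega)]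
    · rw [if_neg (by omega : ¬ (t:ℕ) = 0)] at *
      by_cases hlt : (t:ℕ) - 1 < i
      · rw [if_pos hlt, if_pos ⟨h, by omega⟩]
      · rw [if_neg hlt, if_neg (by omega)]
  intro y
  obtain ⟨g, ⟨x, c, hc⟩, hg⟩ := H r (fun v => χ (ρ v)) y
  exact ⟨g, ⟨ρ x, c, fun i hi => by rw [← hkey x g i hi]; exact hc i hi⟩, hg⟩
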